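/- Let λ > 0 and 1 ≤ k < l ≤ n with N(k,l) ≤ λ, and let x ∈ K'. Then the vertex x' exists (i.e., there is some v with x < v ≤ l and δ_P(x,v) > λ), and x' ∈ L'. -/
import Mathlib


noncomputable section

variable {X : Type*} [MetricSpace X]

/-- Path distance between vertices `i` and `j` of the path `p₁, …, pₙ`:
the sum of the edge weights `d(p_t, p_{t+1})` for `min i j ≤ t < max i j`. -/
def pathDist (p : ℕ → X) (i j : ℕ) : ℝ :=
  ∑ t ∈ Finset.Ico (min i j) (max i j), dist (p t) (p (t + 1))

/-- Shortest-path distance between vertices `x` and `y` in the unicyclic graph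
`P̄[k,l]` obtained by adding the shortcut `(p_k, p_l)` of weight `d(p_k, p_l)`. -/
def pbar (p : ℕ → X) (k l x y : ℕ) : ℝ :=
  min (pathDist p x y)
    (min (pathDist p x k + dist (p k) (p l) + pathDist p l y)
         (pathDist p x l + dist (p k) (p l) + pathDist p k y))

/-- The length `|C[k,l]|` of the cycle `C[k,l]`. -/
def cycleLen (p : ℕ → X) (k l : ℕ) : ℝ :=
  pathDist p k l + dist (p k) (p l)

/-- The cycle distance `c_{k,l}(x,y)` for `k ≤ x, y ≤ l`. -/
def cycDist (p : ℕ → X) (k l x y : ℕ) : ℝ :=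
  min (pathDist p x y) (cycleLen p k l - pathDist p x y)

/-- `S(k,l) = max_{k ≤ x ≤ l} p̄_{k,l}(1,x)`. -/
def Sfun (p : ℕ → X) (k l : ℕ) : ℝ :=
  sSup ((fun x => pbar p k l 1 x) '' Set.Icc k l)

/-- `E(k,l) = max_{k ≤ x ≤ l} p̄_{k,l}(x,n)`. -/
def Efun (p : ℕ → X) (n k l : ℕ) : ℝ :=
  sSup ((fun x => pbar p k l x n) '' Set.Icc k l)

/-- `U(k,l) = p̄_{k,l}(1,n)`. -/
def Ufun (p : ℕ → X) (n k l : ℕ) : ℝ :=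
  pbar p k l 1 n

/-- `O(k,l) = max_{k ≤ x < y ≤ l} c_{k,l}(x,y)`. -/
def Ofun (p : ℕ → X) (k l : ℕ) : ℝ :=
  sSup {r | ∃ x y : ℕ, k ≤ x ∧ x < y ∧ y ≤ l ∧ r = cycDist p k l x y}

/-- `N(k,l) = max (S(k,l), E(k,l), U(k,l))`. -/
def Nfun (p : ℕ → X) (n k l : ℕ) : ℝ :=
  max (Sfun p k l) (max (Efun p n k l) (Ufun p n k l))

/-- `M(k,l) = max_{1 ≤ x < y ≤ n} p̄_{k,l}(x,y)`, the diameter of `P̄[k,l]`. -/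
def Mfun (p : ℕ → X) (n k l : ℕ) : ℝ :=
  sSup {r | ∃ x y : ℕ, 1 ≤ x ∧ x < y ∧ y ≤ n ∧ r = pbar p k l x y}


lemma pathDist_nonneg (p : ℕ → X) (i j : ℕ) : 0 ≤ pathDist p i j :=
  Finset.sum_nonneg fun _ _ => dist_nonneg

lemma pathDist_comm (p : ℕ → X) (i j : ℕ) : pathDist p i j = pathDist p j i := by
  unfold pathDist; rw [min_comm, max_comm]

lemma pathDist_self (p : ℕ → X) (i : ℕ) : pathDist p i i = 0 := by
  unfold pathDist; simp

lemma pathDist_eq (p : ℕ → X) {i j : ℕ} (h : i ≤ j) :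
    pathDist p i j = ∑ t ∈ Finset.Ico i j, dist (p t) (p (t + 1)) := by
  unfold pathDist; rw [min_eq_left h, max_eq_right h]

lemma pathDist_add (p : ℕ → X) {i j m : ℕ} (h1 : i ≤ j) (h2 : j ≤ m) :
    pathDist p i m = pathDist p i j + pathDist p j m := by
  rw [pathDist_eq p (h1.trans h2), pathDist_eq p h1, pathDist_eq p h2,
    Finset.sum_Ico_consecutive _ h1 h2]

/-- Let `λ > 0` and `1 ≤ k < l ≤ n` with `N(k,l) ≤ λ`, and let
`x ∈ K' = K \ L`. Then the vertex `x'` exists (i.e., there is some `v` with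
`x < v ≤ l` and `δ_P(x,v) > λ`), and `x'` (the smallest such index) lies in
`L' = L \ K`. -/
theorem xprime_exists_and_in_L' {X : Type*} [MetricSpace X]
    (n : ℕ) (hn : 2 ≤ n) (p : ℕ → X)
    (k l : ℕ) (hk : 1 ≤ k) (hkl : k < l) (hl : l ≤ n)
    (lam : ℝ) (hlam : 0 < lam) (hN : Nfun p n k l ≤ lam)
    (x : ℕ)
    (hx : x ∈ {z : ℕ | k ≤ z ∧ z ≤ l ∧ pathDist p k z ≤ lam} \
              {z : ℕ | k ≤ z ∧ z ≤ l ∧ pathDist p z l ≤ lam}) :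
    {v : ℕ | x < v ∧ v ≤ l ∧ lam < pathDist p x v}.Nonempty ∧
    sInf {v : ℕ | x < v ∧ v ≤ l ∧ lam < pathDist p x v} ∈
      {z : ℕ | k ≤ z ∧ z ≤ l ∧ pathDist p z l ≤ lam} \
      {z : ℕ | k ≤ z ∧ z ≤ l ∧ pathDist p k z ≤ lam} := by
  obtain ⟨⟨hkx, hxl, hKx⟩, hnotL⟩ := hx
  have hxLgt : lam < pathDist p x l := by
    by_contra h
    exact hnotL ⟨hkx, hxl, not_lt.mp h⟩
  have hxlt : x < l := by
    rcases lt_or_eq_of_le hxl with h | h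
    · exact h
    · exfalso; rw [h, pathDist_self] at hxLgt; linarith
  have hne : {v : ℕ | x < v ∧ v ≤ l ∧ lam < pathDist p x v}.Nonempty :=
    ⟨l, hxlt, le_refl l, hxLgt⟩
  refine ⟨hne, ?_⟩
  set x' := sInf {v : ℕ | x < v ∧ v ≤ l ∧ lam < pathDist p x v} with hx'
  obtain ⟨hxx', hx'l, hxx'gt⟩ := Nat.sInf_mem hne
  have hkx' : k ≤ x' := hkx.trans hxx'.le
  -- pathDist p k x' > lam
  have hkx'gt : lam < pathDist p k x' := by
    have := pathDist_add p hkx hxx'.le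
    have h0 := pathDist_nonneg p k x
    linarith
  -- pbar p k l x' n ≤ lam via Efun
  have hE : Efun p n k l ≤ lam := by
    have : Efun p n k l ≤ Nfun p n k l :=
      le_trans (le_max_left _ _) (le_max_right _ _)
    linarith
  have hpbar : pbar p k l x' n ≤ lam := by
    refine le_trans (le_csSup ?_ ?_) hE
    · exact ((Set.finite_Icc k l).image _).bddAbove
    · exact Set.mem_image_of_mem _ ⟨hkx', hx'l⟩
  have hx'n : pathDist p x' n = pathDist p x' l + pathDist p l n :=
    pathDist_add p hx'l hl
  have hlam2 : pathDist p x' l ≤ lam := by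
    have h1 : pathDist p x' k = pathDist p k x' := pathDist_comm p x' k
    have hb : lam < pathDist p x' k + dist (p k) (p l) + pathDist p l n := by
      rw [h1]
      have := pathDist_nonneg p l n
      have := dist_nonneg (x := p k) (y := p l)
      linarith
    unfold pbar at hpbar
    rcases le_or_gt (pathDist p x' n) lam with h | h
    · have := pathDist_nonneg p l n; linarith [hx'n ▸ h]
    · have hmin : min (pathDist p x' k + dist (p k) (p l) + pathDist p l n)
          (pathDist p x' l + dist (p k) (p l) + pathDist p k n) ≤ lam := by
        rcases le_or_gt (pathDist p x' n)
            (min (pathDist p x' k + dist (p k) (p l) + pathDist p l n)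
              (pathDist p x' l + dist (p k) (p l) + pathDist p k n)) with h2 | h2
        · rw [min_eq_left h2] at hpbar; linarith
        · rw [min_eq_right h2.le] at hpbar; exact hpbar
      rcases min_le_iff.mp hmin with h3 | h3
      · linarith
      · have := pathDist_nonneg p k n
        have := dist_nonneg (x := p k) (y := p l)
        linarith
  exact ⟨⟨hkx', hx'l, hlam2⟩, fun ⟨_, _, hle⟩ => absurd hkx'gt (not_lt.mpr hle)⟩
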